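/- Let C_H be a GH code of length n = q^h·s over 𝔽_q, where s ≠ 1 and s is not a multiple of q. Then ker(C_H) ≤ h. -/

import Mathlib

open Finset

/-- `H` is a generalized Hadamard matrix with parameter `lam`: for every pair of
distinct rows, the multiset of coordinatewise differences contains every element
of `F` exactly `lam` times. -/
def IsGH {F : Type*} [Fintype F] [DecidableEq F] [Sub F]
    {ι : Type*} [Fintype ι] (lam : ℕ) (H : Matrix ι ι F) : Prop :=
  ∀ i j : ι, i ≠ j → ∀ a : F,
    (Finset.univ.filter (fun s => H i s - H j s = a)).card = lam

/-- A matrix is normalized if its first row and first column are all zeros. -/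
def Normalized {F : Type*} [Zero F] {n : ℕ} (H : Matrix (Fin n) (Fin n) F) : Prop :=
  ∀ i s : Fin n, (i.val = 0 ∨ s.val = 0) → H i s = 0

/-- The code `F_H` whose codewords are the rows of `H`. -/
def rowSet {F ι : Type*} (H : Matrix ι ι F) : Set (ι → F) :=
  Set.range (fun i => H i)

/-- The GH code `C_H = ⋃_{α ∈ F} (F_H + α·𝟏)`. -/
def ghCode {F ι : Type*} [Add F] (H : Matrix ι ι F) : Set (ι → F) :=
  {v | ∃ (α : F) (i : ι), v = fun s => H i s + α}

/-- The rank of a code: the dimension of its linear span. -/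
noncomputable def rankC {F ι : Type*} [Field F] (C : Set (ι → F)) : ℕ :=
  Module.finrank F (Submodule.span F C)

/-- The kernel `K(C) = {x : αx + C = C for all α}` of a code. -/
def kerSet {F ι : Type*} [Mul F] [Add F] (C : Set (ι → F)) : Set (ι → F) :=
  {x | ∀ α : F, (fun c => (fun i => α * x i) + c) '' C = C}

/-- The dimension of the kernel of a code. -/
noncomputable def kerDim {F ι : Type*} [Field F] (C : Set (ι → F)) : ℕ :=
  Module.finrank F (Submodule.span F (kerSet C))

/-- The `p`-kernel `K_p(C) = {x : x + C = C}` of a code. -/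
def pKerSet {F ι : Type*} [Add F] (C : Set (ι → F)) : Set (ι → F) :=
  {x | (fun c => x + c) '' C = C}

/-- The Euclidean orthogonal code `C^⊥`. -/
def dualSet {F ι : Type*} [CommRing F] [Fintype ι] (C : Set (ι → F)) : Set (ι → F) :=
  {v | ∀ w ∈ C, ∑ i, v i * w i = 0}

/-- Two matrices are translation equivalent if the rows of one are obtained from the
rows of the other by adding a fixed vector. -/
def TransEquiv {F ι : Type*} [Add F] (B B' : Matrix ι ι F) : Prop :=
  ∃ v : ι → F, rowSet B' = (fun b => v + b) '' rowSet B

/-- The Kronecker sum `H₁ ⊕ H₂`. -/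
def kroneckerSum {F ι κ : Type*} [Add F] (H₁ : Matrix ι ι F) (H₂ : Matrix κ κ F) :
    Matrix (ι × κ) (ι × κ) F :=
  fun p r => H₁ p.1 r.1 + H₂ p.2 r.2

/-- The Kronecker sum `H₁ ⊕ [B₁, …, Bₙ]`, whose `(i,j)` block is `h_{ij} + B_i`. -/
def kroneckerSumFam {F ι κ : Type*} [Add F] (H₁ : Matrix ι ι F) (B : ι → Matrix κ κ F) :
    Matrix (ι × κ) (ι × κ) F :=
  fun p r => H₁ p.1 r.1 + B p.1 p.2 r.2

/-- The multiplicative-table matrix `S_q` of a field. -/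
def mulTable (F : Type*) [Mul F] : Matrix F F F := fun i j => i * j

/-- A code is `K`-additive, for a subfield `K`, if it is a linear space over `K`. -/
def IsAdditiveOver {F ι : Type*} [Field F] (K : Subfield F) (C : Set (ι → F)) : Prop :=
  (0 : ι → F) ∈ C ∧ (∀ x ∈ C, ∀ y ∈ C, x + y ∈ C) ∧
    ∀ (a : K), ∀ x ∈ C, (fun i => (a : F) * x i) ∈ C

/-- The kernel of a code is a linear subspace. -/
def kerSubmodule {F ι : Type*} [Field F] (C : Set (ι → F)) : Submodule F (ι → F) where
  carrier := kerSet C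
  zero_mem' := by
    intro α
    have h : (fun c => (fun i : ι => α * (0 : ι → F) i) + c) = id := by
      funext c; funext t; simp
    rw [h, Set.image_id]
  add_mem' := by
    intro x y hx hy α
    have h : (fun c => (fun i => α * (x + y) i) + c)
        = (fun c => (fun i => α * x i) + c) ∘ (fun c => (fun i => α * y i) + c) := by
      funext c; funext t
      simp only [Function.comp_apply, Pi.add_apply]
      ring
    rw [h, Set.image_comp, hy α, hx α]
  smul_mem' := by
    intro β x hx α
    have h : (fun c => (fun i => α * (β • x) i) + c)
        = (fun c => (fun i => (α * β) * x i) + c) := by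
      funext c; funext t
      simp only [Pi.add_apply, Pi.smul_apply, smul_eq_mul]
      ring
    rw [h]
    exact hx (α * β)

set_option maxHeartbeats 2000000 in
theorem stmt11 {q lam h s : ℕ} {F : Type*} [Field F] [Fintype F] [DecidableEq F]
    (hcard : Fintype.card F = q) (hlam : 0 < lam)
    (hs1 : s ≠ 1) (hs : ¬ q ∣ s) (hn : q * lam = q ^ h * s)
    (H : Matrix (Fin (q * lam)) (Fin (q * lam)) F)
    (hGH : IsGH lam H) (hnorm : Normalized H) :
    kerDim (ghCode H) ≤ h := by
  classical
  have hq2 : 2 ≤ q := hcard ▸ Fintype.one_lt_card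
  have hq0 : 0 < q := by omega
  have hNpos : 0 < q * lam := Nat.mul_pos hq0 hlam
  have hq1 : 1 ≤ q := hq0
  have hh : 1 ≤ h := by
    rcases Nat.eq_zero_or_pos h with h0 | h1
    · exact absurd ⟨lam, by rw [h0, pow_zero, one_mul] at hn; exact hn.symm⟩ hs
    · exact h1
  have hlam_eq : lam = q ^ (h - 1) * s := by
    have hq' : q * lam = q * (q ^ (h - 1) * s) := by
      rw [hn, ← mul_assoc, ← pow_succ']
      congr 2
      omega
    exact Nat.eq_of_mul_eq_mul_left hq0 hq'
  set C := ghCode H with hCdef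
  set i0 : Fin (q * lam) := ⟨0, hNpos⟩ with hi0def
  have hrow0 : ∀ t, H i0 t = 0 := fun t => hnorm i0 t (Or.inl rfl)
  have hcol0 : ∀ i, H i i0 = 0 := fun i => hnorm i i0 (Or.inr rfl)
  have balanced : ∀ i : Fin (q * lam), i ≠ i0 → ∀ β b : F,
      (univ.filter (fun t => H i t + β = b)).card = lam := by
    intro i hi β b
    have hg := hGH i i0 hi (b - β)
    have hfe : (univ.filter (fun t => H i t + β = b))
        = (univ.filter (fun t => H i t - H i0 t = b - β)) := by
      apply Finset.filter_congr
      intro t _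
      rw [hrow0 t, sub_zero]
      exact eq_sub_iff_add_eq.symm
    rw [hfe, hg]
  have row_inj : ∀ i j : Fin (q * lam), H i = H j → i = j := by
    intro i j hij
    by_contra hne
    have h1 := hGH i j hne 1
    have h2 : (univ.filter (fun t => H i t - H j t = (1 : F))).card = 0 := by
      rw [Finset.card_eq_zero, Finset.filter_eq_empty_iff]
      intro t _
      rw [hij]
      simp
    omega
  have memC : ∀ (i : Fin (q * lam)) (α : F), (fun t => H i t + α) ∈ C :=
    fun i α => ⟨α, i, rfl⟩
  have rowC : ∀ i : Fin (q * lam), H i ∈ C := by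
    intro i
    refine ⟨0, i, ?_⟩
    funext t
    simp
  have zeroC : (0 : Fin (q * lam) → F) ∈ C := by
    refine ⟨0, i0, ?_⟩
    funext t
    simp [hrow0]
  have repC : ∀ x ∈ C, ∃ i : Fin (q * lam), x = fun t => H i t + x i0 := by
    rintro x ⟨α, i, rfl⟩
    exact ⟨i, by simp [hcol0]⟩
  set K := kerSet C with hKdef
  have memKiff : ∀ x : Fin (q * lam) → F, x ∈ K ↔ x ∈ kerSubmodule C := fun x => Iff.rfl
  have Kzero : (0 : Fin (q * lam) → F) ∈ K := (memKiff 0).2 (kerSubmodule C).zero_mem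
  have Kadd : ∀ x ∈ K, ∀ y ∈ K, x + y ∈ K := fun x hx y hy =>
    (memKiff _).2 ((kerSubmodule C).add_mem ((memKiff x).1 hx) ((memKiff y).1 hy))
  have Ksmul : ∀ (β : F), ∀ x ∈ K, β • x ∈ K := fun β x hx =>
    (memKiff _).2 ((kerSubmodule C).smul_mem β ((memKiff x).1 hx))
  have Kneg : ∀ x ∈ K, -x ∈ K := fun x hx =>
    (memKiff _).2 ((kerSubmodule C).neg_mem ((memKiff x).1 hx))
  have Ksub : ∀ x ∈ K, ∀ y ∈ K, x - y ∈ K := fun x hx y hy =>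
    (memKiff _).2 ((kerSubmodule C).sub_mem ((memKiff x).1 hx) ((memKiff y).1 hy))
  have Kone : (1 : Fin (q * lam) → F) ∈ K := by
    intro α
    ext v
    constructor
    · rintro ⟨c, ⟨β, i, rfl⟩, rfl⟩
      refine ⟨β + α, i, ?_⟩
      funext t
      simp only [Pi.add_apply, Pi.one_apply]
      ring
    · rintro ⟨β, i, rfl⟩
      refine ⟨fun t => H i t + (β - α), ⟨β - α, i, rfl⟩, ?_⟩
      funext t
      simp only [Pi.add_apply, Pi.one_apply]
      ring
  have KplusC : ∀ x ∈ K, ∀ c ∈ C, x + c ∈ C := by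
    intro x hx c hc
    have h1 := hx 1
    rw [← h1]
    refine ⟨c, hc, ?_⟩
    funext t
    simp
  have KsubC : ∀ x ∈ K, x ∈ C := by
    intro x hx
    have hx0 := KplusC x hx 0 zeroC
    simpa using hx0
  set k := kerDim C with hkdef
  haveI : Fintype ↥(kerSubmodule C) := Fintype.ofFinite _
  have hcardK : Fintype.card ↥(kerSubmodule C) = q ^ k := by
    rw [Module.card_eq_pow_finrank (K := F) (V := ↥(kerSubmodule C)), hcard]
    congr 1
    rw [hkdef]
    unfold kerDim
    rw [show kerSet C = ↑(kerSubmodule C) from rfl, Submodule.span_eq (kerSubmodule C)]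
  have hKfilter : (univ.filter (fun x : Fin (q * lam) → F => x ∈ K)).card = q ^ k := by
    rw [← hcardK]
    rw [← Fintype.card_subtype]
    exact (Fintype.card_congr (Equiv.subtypeEquivRight (fun x => (memKiff x).symm))).symm
  set G : Finset (Fin (q * lam) → F) := univ.filter (fun x => x ∈ K ∧ x i0 = 0) with hGdef
  have memG : ∀ x, x ∈ G ↔ x ∈ K ∧ x i0 = 0 := by
    intro x
    rw [hGdef, Finset.mem_filter]
    simp
  have GK : ∀ x ∈ G, x ∈ K := fun x hx => ((memG x).1 hx).1
  have Gi0 : ∀ x ∈ G, x i0 = 0 := fun x hx => ((memG x).1 hx).2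
  have Gzero : (0 : Fin (q * lam) → F) ∈ G := (memG 0).2 ⟨Kzero, rfl⟩
  have Gadd : ∀ x ∈ G, ∀ y ∈ G, x + y ∈ G := by
    intro x hx y hy
    refine (memG _).2 ⟨Kadd x (GK x hx) y (GK y hy), ?_⟩
    simp [Pi.add_apply, Gi0 x hx, Gi0 y hy]
  have Gsmul : ∀ (β : F), ∀ x ∈ G, β • x ∈ G := by
    intro β x hx
    refine (memG _).2 ⟨Ksmul β x (GK x hx), ?_⟩
    simp [Pi.smul_apply, Gi0 x hx]
  have Gsub : ∀ x ∈ G, ∀ y ∈ G, x - y ∈ G := by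
    intro x hx y hy
    refine (memG _).2 ⟨Ksub x (GK x hx) y (GK y hy), ?_⟩
    simp [Pi.sub_apply, Gi0 x hx, Gi0 y hy]
  have Grow : ∀ x ∈ G, ∃ i, x = H i := by
    intro x hx
    obtain ⟨i, hi⟩ := repC x (KsubC x (GK x hx))
    rw [Gi0 x hx] at hi
    exact ⟨i, by simpa using hi⟩
  have Gbal : ∀ x ∈ G, x ≠ 0 → ∀ b : F, (univ.filter (fun t => x t = b)).card = lam := by
    intro x hx hx0 b
    obtain ⟨i, rfl⟩ := Grow x hx
    have hine : i ≠ i0 := by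
      rintro rfl
      exact hx0 (funext hrow0)
    have hb := balanced i hine 0 b
    have hfe : (univ.filter (fun t => H i t = b)) = (univ.filter (fun t => H i t + 0 = b)) := by
      apply Finset.filter_congr
      intro t _
      simp
    rw [hfe, hb]
  have hKG : (univ.filter (fun x : Fin (q * lam) → F => x ∈ K)).card = G.card * q := by
    have hbij : (univ.filter (fun x : Fin (q * lam) → F => x ∈ K)).card
        = (G ×ˢ (univ : Finset F)).card := by
      refine Finset.card_bij' (fun x _ => (x - x i0 • 1, x i0)) (fun p _ => p.1 + p.2 • 1)
        ?_ ?_ ?_ ?_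
      · intro x hx
        have hxK : x ∈ K := (Finset.mem_filter.mp hx).2
        refine Finset.mem_product.mpr
          ⟨(memG _).2 ⟨Ksub x hxK _ (Ksmul _ _ Kone), ?_⟩, Finset.mem_univ _⟩
        simp
      · intro p hp
        have hp1 : p.1 ∈ G := (Finset.mem_product.mp hp).1
        exact Finset.mem_filter.mpr ⟨Finset.mem_univ _, Kadd _ (GK _ hp1) _ (Ksmul _ _ Kone)⟩
      · intro x hx
        simp
      · intro p hp
        have hp1 : p.1 ∈ G := (Finset.mem_product.mp hp).1
        have h1 : (p.1 + p.2 • (1 : Fin (q * lam) → F)) i0 = p.2 := by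
          simp [Gi0 p.1 hp1]
        simp [h1]
    rw [hbij, Finset.card_product, Finset.card_univ, hcard]
  by_contra hcon
  push_neg at hcon
  have hk1 : h + 1 ≤ k := hcon
  have hγpos : 0 < G.card := Finset.card_pos.2 ⟨0, Gzero⟩
  have hγ : G.card = q ^ (k - 1) := by
    have hpow : q ^ k = q ^ (k - 1) * q := by
      rw [← pow_succ]
      congr 1
      omega
    apply Nat.eq_of_mul_eq_mul_right hq0
    rw [← hpow, ← hKG, hKfilter]
  have hkm : k - 1 = (k - 2) + 1 := by omega
  have hkm1 : k = (k - 1) + 1 := by omega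
  have hkh : k - 1 = (h - 1) + (k - h) := by omega
  have hkh1 : k - h = (k - h - 1) + 1 := by omega
  have hkh2 : k - 1 = h + (k - 1 - h) := by omega
  set T0 : Finset (Fin (q * lam)) := univ.filter (fun t => ∀ x ∈ G, x t = 0) with hT0def
  have memT0 : ∀ t, t ∈ T0 ↔ ∀ x ∈ G, x t = 0 := by
    intro t
    rw [hT0def, Finset.mem_filter]
    simp
  have fiberT0 : ∀ t ∈ T0, ∀ c : F,
      (G.filter (fun x => x t = c)).card = if c = 0 then G.card else 0 := by
    intro t ht c
    by_cases hc : c = 0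
    · subst hc
      rw [if_pos rfl, Finset.filter_true_of_mem]
      intro x hx
      exact (memT0 t).1 ht x hx
    · rw [if_neg hc, Finset.card_eq_zero, Finset.filter_eq_empty_iff]
      intro x hx hxc
      exact hc (by rw [← hxc]; exact (memT0 t).1 ht x hx)
  have fiberAct : ∀ t ∉ T0, ∀ c : F,
      (G.filter (fun x => x t = c)).card = q ^ (k - 2) := by
    intro t ht c
    obtain ⟨x0, hx0G, hx0t⟩ : ∃ x0 ∈ G, x0 t ≠ 0 := by
      by_contra hall
      push_neg at hall
      exact ht ((memT0 t).2 hall)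
    have hshift : ∀ c : F, (G.filter (fun x => x t = c)).card
        = (G.filter (fun x => x t = 0)).card := by
      intro c
      set gc := (c * (x0 t)⁻¹) • x0 with hgc
      have hgcG : gc ∈ G := Gsmul _ x0 hx0G
      have hgct : gc t = c := by
        rw [hgc]
        simp only [Pi.smul_apply, smul_eq_mul]
        rw [mul_assoc, inv_mul_cancel₀ hx0t, mul_one]
      refine Finset.card_bij' (fun x _ => x - gc) (fun y _ => y + gc) ?_ ?_ ?_ ?_
      · intro a ha
        have h1 := Finset.mem_filter.mp ha
        refine Finset.mem_filter.mpr ⟨Gsub a h1.1 gc hgcG, ?_⟩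
        simp [Pi.sub_apply, h1.2, hgct]
      · intro a ha
        have h1 := Finset.mem_filter.mp ha
        refine Finset.mem_filter.mpr ⟨Gadd a h1.1 gc hgcG, ?_⟩
        simp [Pi.add_apply, h1.2, hgct]
      · intro a _
        simp
      · intro a _
        simp
    have hsum : ∑ c : F, (G.filter (fun x => x t = c)).card = G.card :=
      (Finset.card_eq_sum_card_fiberwise (fun x _ => Finset.mem_univ (x t))).symm
    have hGq : G.card = q * (G.filter (fun x => x t = 0)).card := by
      rw [← hsum, Finset.sum_congr rfl (fun c _ => hshift c), Finset.sum_const,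
        Finset.card_univ, hcard, smul_eq_mul]
    have hk2 : q ^ (k - 1) = q * q ^ (k - 2) := by
      rw [hkm, pow_succ']
    rw [hγ, hk2] at hGq
    rw [hshift c]
    exact (Nat.eq_of_mul_eq_mul_left hq0 hGq).symm
  have swapA : ∑ x ∈ G, (univ.filter (fun t => x t = 0)).card
      = ∑ t : Fin (q * lam), (G.filter (fun x => x t = 0)).card := by
    simp only [Finset.card_filter]
    exact Finset.sum_comm
  have sumA_left : ∑ x ∈ G, (univ.filter (fun t => x t = 0)).card
      = q * lam + (G.card - 1) * lam := by
    rw [← Finset.add_sum_erase _ _ Gzero]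
    congr 1
    · simp
    · calc ∑ x ∈ G.erase 0, (univ.filter (fun t => x t = 0)).card
          = ∑ _x ∈ G.erase 0, lam := Finset.sum_congr rfl (fun x hx =>
            Gbal x (Finset.mem_of_mem_erase hx) (Finset.ne_of_mem_erase hx) 0)
        _ = (G.card - 1) * lam := by
            rw [Finset.sum_const, smul_eq_mul, Finset.card_erase_of_mem Gzero]
  set m1 := (univ.filter (fun t : Fin (q * lam) => t ∉ T0)).card with hm1def
  have hm0m1 : T0.card + m1 = q * lam := by
    rw [hm1def]
    rw [show T0.card = (univ.filter (fun t : Fin (q * lam) => t ∈ T0)).card by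
      rw [Finset.filter_mem_eq_inter, Finset.univ_inter]]
    rw [Finset.card_filter_add_card_filter_not, Finset.card_univ, Fintype.card_fin]
  have sumA_right : ∑ t : Fin (q * lam), (G.filter (fun x => x t = 0)).card
      = T0.card * G.card + m1 * q ^ (k - 2) := by
    rw [← Finset.sum_filter_add_sum_filter_not univ (fun t => t ∈ T0)]
    congr 1
    · rw [Finset.filter_mem_eq_inter, Finset.univ_inter]
      calc ∑ t ∈ T0, (G.filter (fun x => x t = 0)).card
          = ∑ _t ∈ T0, G.card := Finset.sum_congr rfl (fun t ht => by
              rw [fiberT0 t ht 0, if_pos rfl])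
        _ = T0.card * G.card := by rw [Finset.sum_const, smul_eq_mul]
    · calc ∑ t ∈ univ.filter (fun t => t ∉ T0), (G.filter (fun x => x t = 0)).card
          = ∑ t ∈ univ.filter (fun t => t ∉ T0), q ^ (k - 2) :=
            Finset.sum_congr rfl (fun t ht => fiberAct t (Finset.mem_filter.mp ht).2 0)
        _ = m1 * q ^ (k - 2) := by rw [Finset.sum_const, smul_eq_mul]
  have eqA : q * lam + (G.card - 1) * lam = T0.card * G.card + m1 * q ^ (k - 2) := by
    rw [← sumA_left, swapA, sumA_right]
  have hex : ∃ j : Fin (q * lam), H j ∉ K := by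
    by_contra hall
    push_neg at hall
    have hcards : (univ : Finset (Fin (q * lam))).card = G.card := by
      apply Finset.card_bij (fun i _ => H i)
      · intro i _
        exact (memG _).2 ⟨hall i, hcol0 i⟩
      · intro a _ b _ hab
        exact row_inj a b hab
      · intro x hx
        obtain ⟨i, rfl⟩ := Grow x hx
        exact ⟨i, Finset.mem_univ i, rfl⟩
    rw [Finset.card_univ, Fintype.card_fin, hγ, hn] at hcards
    have hfac : q ^ (k - 1) = q ^ h * q ^ (k - 1 - h) := by
      conv_lhs => rw [hkh2]
      rw [pow_add]
    rw [hfac] at hcards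
    have hseq : s = q ^ (k - 1 - h) :=
      Nat.eq_of_mul_eq_mul_left (pow_pos hq0 h) hcards
    rcases Nat.eq_zero_or_pos (k - 1 - h) with h0 | hpos
    · rw [h0, pow_zero] at hseq
      exact hs1 hseq
    · apply hs
      rw [hseq]
      exact dvd_pow_self q hpos.ne'
  obtain ⟨j, hjK⟩ := hex
  have hdi0 : H j i0 = 0 := hcol0 j
  have GbalD : ∀ x ∈ G, ∀ b : F,
      (univ.filter (fun t => x t + H j t = b)).card = lam := by
    intro x hx b
    have hxdC : x + H j ∈ C := KplusC x (GK x hx) (H j) (rowC j)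
    obtain ⟨m, hm⟩ := repC _ hxdC
    have hmi0 : (x + H j) i0 = 0 := by
      simp [Pi.add_apply, Gi0 x hx, hdi0]
    rw [hmi0] at hm
    have hm' : x + H j = H m := by
      rw [hm]
      funext t
      simp
    have hmne : m ≠ i0 := by
      rintro rfl
      apply hjK
      have hxd0 : x + H j = 0 := by
        rw [hm']
        funext t
        exact hrow0 t
      have hdneg : H j = -x := (neg_eq_of_add_eq_zero_right hxd0).symm
      rw [hdneg]
      exact Kneg x (GK x hx)
    have hb := balanced m hmne 0 b
    have hfe : (univ.filter (fun t => x t + H j t = b))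
        = (univ.filter (fun t => H m t + 0 = b)) := by
      apply Finset.filter_congr
      intro t _
      have hct : x t + H j t = H m t := congrFun hm' t
      rw [add_zero, ← hct]
    rw [hfe, hb]
  have hkh0 : k - h ≠ 0 := Nat.sub_ne_zero_of_lt hcon
  have swapB : ∑ x ∈ G, (univ.filter (fun t => x t + H j t = 0)).card
      = ∑ t : Fin (q * lam), (G.filter (fun x => x t + H j t = 0)).card := by
    simp only [Finset.card_filter]
    exact Finset.sum_comm
  have sumB_left : ∑ x ∈ G, (univ.filter (fun t => x t + H j t = 0)).card
      = G.card * lam := by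
    rw [Finset.sum_congr rfl (fun x hx => GbalD x hx 0), Finset.sum_const, smul_eq_mul]
  set n0 := (T0.filter (fun t => H j t = 0)).card with hn0def
  have fcong : ∀ t : Fin (q * lam), (G.filter (fun x => x t + H j t = 0))
      = (G.filter (fun x => x t = -(H j t))) := by
    intro t
    apply Finset.filter_congr
    intro x _
    constructor
    · intro hxt
      exact eq_neg_of_add_eq_zero_left hxt
    · intro hxt
      rw [hxt]
      exact neg_add_cancel (H j t)
  have sumB_right : ∑ t : Fin (q * lam), (G.filter (fun x => x t + H j t = 0)).card
      = n0 * G.card + m1 * q ^ (k - 2) := by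
    rw [← Finset.sum_filter_add_sum_filter_not univ (fun t => t ∈ T0)]
    congr 1
    · rw [Finset.filter_mem_eq_inter, Finset.univ_inter]
      calc ∑ t ∈ T0, (G.filter (fun x => x t + H j t = 0)).card
          = ∑ t ∈ T0, (if H j t = 0 then G.card else 0) :=
            Finset.sum_congr rfl (fun t ht => by
              rw [fcong t, fiberT0 t ht (-(H j t))]
              simp only [neg_eq_zero])
        _ = n0 * G.card := by
            rw [hn0def, ← Finset.sum_filter, Finset.sum_const, smul_eq_mul]
    · calc ∑ t ∈ univ.filter (fun t => t ∉ T0), (G.filter (fun x => x t + H j t = 0)).card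
          = ∑ _t ∈ univ.filter (fun t : Fin (q * lam) => t ∉ T0), q ^ (k - 2) :=
            Finset.sum_congr rfl (fun t ht => by
              rw [fcong t]
              exact fiberAct t (Finset.mem_filter.mp ht).2 (-(H j t)))
        _ = m1 * q ^ (k - 2) := by rw [Finset.sum_const, smul_eq_mul]
  have eqB : G.card * lam = n0 * G.card + m1 * q ^ (k - 2) := by
    rw [← sumB_left, swapB, sumB_right]
  have hγ1 : 1 ≤ G.card := hγpos
  zify [hγ1] at eqA
  zify at eqB
  have key1 : ((q : ℤ) - 1) * lam = ((T0.card : ℤ) - n0) * G.card := by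
    linear_combination eqA - eqB
  have hγnat : G.card = q ^ (h - 1) * q ^ (k - h) := by
    rw [hγ]
    conv_lhs => rw [hkh]
    rw [pow_add]
  have h1z : (lam : ℤ) = (q : ℤ) ^ (h - 1) * s := by
    rw [hlam_eq]
    push_cast
    ring
  have h2z : (G.card : ℤ) = (q : ℤ) ^ (h - 1) * (q : ℤ) ^ (k - h) := by
    rw [hγnat]
    push_cast
    ring
  have key2 : ((q : ℤ) - 1) * ((q : ℤ) ^ (h - 1) * s)
      = ((T0.card : ℤ) - n0) * ((q : ℤ) ^ (h - 1) * (q : ℤ) ^ (k - h)) := by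
    rw [← h1z, ← h2z]
    exact key1
  have key3 : ((q : ℤ) - 1) * s = ((T0.card : ℤ) - n0) * (q : ℤ) ^ (k - h) := by
    refine mul_left_cancel₀ (a := (q : ℤ) ^ (h - 1)) (pow_ne_zero (h - 1) ?_) ?_
    · exact_mod_cast hq0.ne'
    · linear_combination key2
  have hdvd : (q : ℤ) ∣ ((q : ℤ) - 1) * s := by
    rw [key3]
    exact Dvd.dvd.mul_left (dvd_pow_self _ hkh0) _
  have hdvdn : q ∣ (q - 1) * s := by
    have hcast : (((q - 1) * s : ℕ) : ℤ) = ((q : ℤ) - 1) * s := by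
      push_cast [Nat.cast_sub hq1]
      ring
    have h3 : ((q : ℕ) : ℤ) ∣ (((q - 1) * s : ℕ) : ℤ) := by
      rw [hcast]
      exact hdvd
    exact_mod_cast h3
  have hcop : Nat.Coprime q (q - 1) :=
    (Nat.coprime_self_sub_right hq1).mpr (Nat.coprime_one_right q)
  exact hs (hcop.dvd_of_dvd_mul_left hdvdn)
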